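/- Under the standing assumptions, for all θ, θ' ∈ ℝ^d, every 0 < λ < 1 and every ε_h ∈ (0,1/2], the derivative of the tamed coefficient satisfies the polynomially weighted Lipschitz bound ‖∇h_λ(θ) − ∇h_λ(θ')‖ ≤ L_{∇,ε_h} (1+|θ|+|θ'|)^{(l+1)(1/ε_h+1)−2} |θ − θ'|, where L_{∇,ε_h} := (10√2 + 4/ε_h)(l+1)² · max{K_H, L, K_h, a}. -/

import Mathlib

open Real

lemma aux_norm_rpow_hasFDerivAt {E : Type*} [NormedAddCommGroup E] [InnerProductSpace ℝ E]
    {p : ℝ} (hp : 2 ≤ p) (x : E) :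
    HasFDerivAt (fun y : E => ‖y‖ ^ p) ((p * ‖x‖ ^ (p - 2)) • innerSL ℝ x) x := by
  have h1 : HasFDerivAt (fun y : E => ‖y‖ ^ 2)
      ((2 : ℕ) • ((innerSL ℝ x).comp (ContinuousLinearMap.id ℝ E))) x :=
    (hasFDerivAt_id x).norm_sq
  have h2 : HasDerivAt (fun t : ℝ => t ^ (p / 2)) ((p / 2) * (‖x‖ ^ 2) ^ (p / 2 - 1)) (‖x‖ ^ 2) :=
    Real.hasDerivAt_rpow_const (Or.inr (by linarith))
  have h3 := h2.comp_hasFDerivAt x h1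
  have h4 : HasFDerivAt (fun y : E => (‖y‖ ^ 2) ^ (p / 2))
      ((p / 2 * (‖x‖ ^ 2) ^ (p / 2 - 1)) • ((2 : ℕ) • ((innerSL ℝ x).comp (ContinuousLinearMap.id ℝ E)))) x := h3
  have hfun : (fun y : E => (‖y‖ ^ 2) ^ (p / 2)) = fun y : E => ‖y‖ ^ p := by
    funext y
    rw [← Real.rpow_natCast ‖y‖ 2, ← Real.rpow_mul (norm_nonneg y),
      show ((2:ℕ) : ℝ) * (p / 2) = p by push_cast; ring]
  have hder : (‖x‖ ^ 2 : ℝ) ^ (p / 2 - 1) = ‖x‖ ^ (p - 2) := by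
    rw [← Real.rpow_natCast ‖x‖ 2, ← Real.rpow_mul (norm_nonneg x),
      show ((2:ℕ) : ℝ) * (p / 2 - 1) = p - 2 by push_cast; ring]
  rw [hfun, hder] at h4
  convert h4 using 1
  ext v
  simp only [ContinuousLinearMap.smul_apply, ContinuousLinearMap.coe_smul',
    ContinuousLinearMap.comp_id, Pi.smul_apply, smul_eq_mul, nsmul_eq_mul, Nat.cast_ofNat]
  ring

lemma aux_key {lam s t r : ℝ} (hs : 0 ≤ s) (hlam0 : 0 ≤ lam) (hlam1 : lam ≤ 1)
    (ht : 0 ≤ t) (htr : t ≤ r) : lam * s ^ t ≤ 1 + lam * s ^ r := by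
  rcases le_total s 1 with h | h
  · have h1 : s ^ t ≤ 1 := Real.rpow_le_one hs h ht
    nlinarith [Real.rpow_nonneg hs r, Real.rpow_nonneg hs t]
  · have h1 : s ^ t ≤ s ^ r := Real.rpow_le_rpow_of_exponent_le h htr
    nlinarith [Real.rpow_nonneg hs t]

lemma aux_W_pos {lam s r : ℝ} (hs : 0 ≤ s) (hlam : 0 ≤ lam) :
    0 < 1 + lam * s ^ r :=
  lt_add_of_lt_of_nonneg one_pos (mul_nonneg hlam (Real.rpow_nonneg hs r))

lemma aux_ratio {lam s t r eps : ℝ} (hs : 0 ≤ s) (hlam0 : 0 ≤ lam) (hlam1 : lam ≤ 1)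
    (heps : 0 ≤ eps) (ht : 0 ≤ t) (htr : t ≤ r) :
    lam * s ^ t * (1 + lam * s ^ r) ^ (-(eps + 1)) ≤ 1 := by
  have hW : 0 < 1 + lam * s ^ r := aux_W_pos hs hlam0
  have h1 : (1 + lam * s ^ r) ^ (-(eps + 1)) = ((1 + lam * s ^ r) ^ (eps + 1))⁻¹ :=
    Real.rpow_neg hW.le _
  have h2 : (1 + lam * s ^ r) ≤ (1 + lam * s ^ r) ^ (eps + 1) := by
    nth_rewrite 1 [← Real.rpow_one (1 + lam * s ^ r)]
    exact Real.rpow_le_rpow_of_exponent_le (by nlinarith [Real.rpow_nonneg hs r]) (by linarith)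
  have h3 : lam * s ^ t ≤ (1 + lam * s ^ r) ^ (eps + 1) :=
    le_trans (aux_key hs hlam0 hlam1 ht htr) h2
  rw [h1, ← div_eq_mul_inv]
  exact div_le_one_of_le₀ h3 (by positivity)

-- derivative of s ↦ (1+lam*s^r)^(-e) (for any e, at s ≥ 0, r ≥ 2)
lemma aux_GD {lam r e s : ℝ} (hlam : 0 ≤ lam) (hr : 2 ≤ r) (hs : 0 ≤ s) :
    HasDerivAt (fun t : ℝ => (1 + lam * t ^ r) ^ (-e))
      (-e * (1 + lam * s ^ r) ^ (-e - 1) * (lam * (r * s ^ (r - 1)))) s := by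
  have hW : 0 < 1 + lam * s ^ r := aux_W_pos hs hlam
  have hin : HasDerivAt (fun t : ℝ => 1 + lam * t ^ r) (lam * (r * s ^ (r - 1))) s :=
    ((Real.hasDerivAt_rpow_const (p := r) (Or.inr (by linarith))).const_mul lam).const_add 1
  have hout : HasDerivAt (fun t : ℝ => t ^ (-e)) (-e * (1 + lam * s ^ r) ^ (-e - 1))
      (1 + lam * s ^ r) := Real.hasDerivAt_rpow_const (Or.inl hW.ne')
  exact hout.comp s hin

-- derivative of C s = -(eps * (1+lam s^r)^(-(eps+1)) * (lam * (r * s^(r-2))))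
noncomputable def auxCd (lam r eps s : ℝ) : ℝ :=
  -(eps * (-(eps + 1) * (1 + lam * s ^ r) ^ (-(eps + 1) - 1) * (lam * (r * s ^ (r - 1)))) *
      (lam * (r * s ^ (r - 2)))) +
    -(eps * (1 + lam * s ^ r) ^ (-(eps + 1))) * (lam * (r * ((r - 2) * s ^ (r - 3))))

lemma aux_CD {lam r eps s : ℝ} (hlam : 0 ≤ lam) (hr : 3 ≤ r) (hs : 0 ≤ s) :
    HasDerivAt (fun t : ℝ => -(eps * (1 + lam * t ^ r) ^ (-(eps + 1)) * (lam * (r * t ^ (r - 2)))))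
      (auxCd lam r eps s) s := by
  have hA : HasDerivAt (fun t : ℝ => (1 + lam * t ^ r) ^ (-(eps + 1)))
      (-(eps + 1) * (1 + lam * s ^ r) ^ (-(eps + 1) - 1) * (lam * (r * s ^ (r - 1)))) s :=
    aux_GD hlam (by linarith) hs
  have hB : HasDerivAt (fun t : ℝ => t ^ (r - 2)) ((r - 2) * s ^ (r - 2 - 1)) s :=
    Real.hasDerivAt_rpow_const (Or.inr (by linarith))
  have hAB := ((hA.const_mul eps).mul ((hB.const_mul r).const_mul lam)).neg
  refine hAB.congr_deriv ?_
  unfold auxCd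
  have h3 : r - 2 - 1 = r - 3 := by ring
  rw [← h3]; ring

lemma aux_ratio' {lam s r e c : ℝ} (hs : 0 ≤ s) (hlam0 : 0 ≤ lam) (he : 0 ≤ e)
    (hc0 : 0 ≤ c) (hc : c ≤ 1 + lam * s ^ r) :
    c * (1 + lam * s ^ r) ^ (-(e + 1)) ≤ 1 := by
  have hW : 0 < 1 + lam * s ^ r := aux_W_pos hs hlam0
  have h1 : (1 + lam * s ^ r) ^ (-(e + 1)) = ((1 + lam * s ^ r) ^ (e + 1))⁻¹ :=
    Real.rpow_neg hW.le _
  have h2 : (1 + lam * s ^ r) ≤ (1 + lam * s ^ r) ^ (e + 1) := by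
    nth_rewrite 1 [← Real.rpow_one (1 + lam * s ^ r)]
    exact Real.rpow_le_rpow_of_exponent_le (by nlinarith [Real.rpow_nonneg hs r]) (by linarith)
  rw [h1, ← div_eq_mul_inv]
  exact div_le_one_of_le₀ (le_trans hc h2) (by positivity)

lemma aux_C_bound {lam r eps s t : ℝ} (hs : 0 ≤ s) (hlam0 : 0 < lam) (hlam1 : lam ≤ 1)
    (heps : 0 < eps) (ht : 0 ≤ t) (htr : t ≤ r) :
    |(-(eps * (1 + lam * s ^ r) ^ (-(eps + 1)) * (lam * (r * s ^ t))))| ≤ eps * r := by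
  have hW : 0 < 1 + lam * s ^ r := aux_W_pos hs hlam0.le
  have hr0 : 0 ≤ r := le_trans ht htr
  have hf2 : 0 ≤ (1 + lam * s ^ r) ^ (-(eps + 1)) := Real.rpow_nonneg hW.le _
  have hst : 0 ≤ s ^ t := Real.rpow_nonneg hs _
  have hkey : lam * s ^ t * (1 + lam * s ^ r) ^ (-(eps + 1)) ≤ 1 := by
    refine aux_ratio' hs hlam0.le heps.le (by positivity) ?_
    exact aux_key hs hlam0.le hlam1 ht htr
  rw [abs_neg, abs_of_nonneg (by positivity)]
  calc eps * (1 + lam * s ^ r) ^ (-(eps + 1)) * (lam * (r * s ^ t))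
      = (eps * r) * (lam * s ^ t * (1 + lam * s ^ r) ^ (-(eps + 1))) := by ring
    _ ≤ (eps * r) * 1 := by
        exact mul_le_mul_of_nonneg_left hkey (by positivity)
    _ = eps * r := mul_one _

lemma aux_Cd_bound {lam r eps s : ℝ} (hlam0 : 0 < lam) (hlam1 : lam ≤ 1)
    (heps : 0 < eps) (hr : 4 ≤ r) (hs : 0 ≤ s) :
    |auxCd lam r eps s| ≤ eps * (eps + 2) * r ^ 2 * s ^ (r - 3) := by
  have hW : 0 < 1 + lam * s ^ r := aux_W_pos hs hlam0.le
  set f1 := (1 + lam * s ^ r) ^ (-(eps + 1) - 1) with hf1def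
  set f2 := (1 + lam * s ^ r) ^ (-(eps + 1)) with hf2def
  have hf1 : 0 ≤ f1 := Real.rpow_nonneg hW.le _
  have hf2 : 0 ≤ f2 := Real.rpow_nonneg hW.le _
  rcases eq_or_lt_of_le hs with h0 | h0
  · have h0 : s = 0 := h0.symm
    subst h0
    have z1 : (0:ℝ) ^ (r - 1) = 0 := Real.zero_rpow (by intro hz; linarith)
    have z3 : (0:ℝ) ^ (r - 3) = 0 := Real.zero_rpow (by intro hz; linarith)
    unfold auxCd
    rw [← hf1def, ← hf2def, z1, z3]
    simp
  · have hAB : s ^ (r - 1) * s ^ (r - 2) = s ^ (r - 3) * s ^ r := by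
      rw [← Real.rpow_add h0, ← Real.rpow_add h0]; ring_nf
    have e1 : auxCd lam r eps s =
        eps * (eps + 1) * r ^ 2 * s ^ (r - 3) * (lam ^ 2 * s ^ r * f1)
          - eps * r * (r - 2) * s ^ (r - 3) * (lam * f2) := by
      unfold auxCd
      rw [← hf1def, ← hf2def]
      linear_combination (eps * (eps + 1) * lam ^ 2 * r ^ 2 * f1) * hAB
    have k2 : lam ^ 2 * s ^ r * f1 ≤ 1 := by
      rw [hf1def, show -(eps + 1) - 1 = -((eps + 1) + 1) by ring]
      refine aux_ratio' hs hlam0.le (by linarith) (by positivity) ?_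
      nlinarith [Real.rpow_nonneg hs r]
    have k3 : lam * f2 ≤ 1 := by
      rw [hf2def]
      refine aux_ratio' hs hlam0.le heps.le hlam0.le ?_
      nlinarith [Real.rpow_nonneg hs r]
    have hsr3 : 0 ≤ s ^ (r - 3) := Real.rpow_nonneg hs _
    have hsr : 0 ≤ s ^ r := Real.rpow_nonneg hs _
    have hr0 : (0:ℝ) ≤ r := by linarith
    have hr2 : (0:ℝ) ≤ r - 2 := by linarith
    have hA : eps * (eps + 1) * r ^ 2 * s ^ (r - 3) * (lam ^ 2 * s ^ r * f1)
        ≤ eps * (eps + 1) * r ^ 2 * s ^ (r - 3) :=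
      mul_le_of_le_one_right (by positivity) k2
    have hA0 : (0:ℝ) ≤ eps * (eps + 1) * r ^ 2 * s ^ (r - 3) * (lam ^ 2 * s ^ r * f1) := by
      positivity
    have hB : eps * r * (r - 2) * s ^ (r - 3) * (lam * f2)
        ≤ eps * r * (r - 2) * s ^ (r - 3) := by
      refine mul_le_of_le_one_right ?_ k3
      exact mul_nonneg (mul_nonneg (mul_nonneg heps.le hr0) hr2) hsr3
    have hB0 : (0:ℝ) ≤ eps * r * (r - 2) * s ^ (r - 3) * (lam * f2) :=
      mul_nonneg (mul_nonneg (mul_nonneg (mul_nonneg heps.le hr0) hr2) hsr3)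
        (mul_nonneg hlam0.le hf2)
    have hr2' : (0:ℝ) ≤ eps * r ^ 2 + 2 * r := by nlinarith
    have hC : eps * r * (r - 2) * s ^ (r - 3) ≤ eps * (eps + 2) * r ^ 2 * s ^ (r - 3) := by
      nlinarith [mul_nonneg (mul_nonneg heps.le hsr3) hr2',
        mul_nonneg (mul_nonneg heps.le hsr3) (sq_nonneg r)]
    have hD : eps * (eps + 1) * r ^ 2 * s ^ (r - 3) ≤ eps * (eps + 2) * r ^ 2 * s ^ (r - 3) := by
      nlinarith [mul_nonneg (mul_nonneg heps.le hsr3) (sq_nonneg r)]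
    rw [abs_le]
    constructor
    · rw [e1]; linarith
    · rw [e1]; linarith

lemma aux_Gd_bound {lam r eps s : ℝ} (hs : 0 ≤ s) (hlam0 : 0 < lam) (hlam1 : lam ≤ 1)
    (heps : 0 < eps) (hr : 1 ≤ r) :
    |(-eps * (1 + lam * s ^ r) ^ (-eps - 1) * (lam * (r * s ^ (r - 1))))| ≤ eps * r := by
  have h1 : -eps * (1 + lam * s ^ r) ^ (-eps - 1) * (lam * (r * s ^ (r - 1)))
      = -(eps * (1 + lam * s ^ r) ^ (-(eps + 1)) * (lam * (r * s ^ (r - 1)))) := by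
    rw [show -eps - 1 = -(eps + 1) by ring]; ring
  rw [h1]
  exact aux_C_bound hs hlam0 hlam1 heps (by linarith) (by linarith)

lemma aux_C_bound' {lam r eps s : ℝ} (hs : 0 ≤ s) (hlam0 : 0 < lam) (hlam1 : lam ≤ 1)
    (heps : 0 < eps) (hr : 3 ≤ r) :
    |(-(eps * (1 + lam * s ^ r) ^ (-(eps + 1)) * (lam * (r * s ^ (r - 2)))))| * s ≤ eps * r := by
  rcases eq_or_lt_of_le hs with h0 | h0
  · rw [← h0, mul_zero]; positivity
  · have hfold : s ^ (r - 2) * s = s ^ (r - 1) := by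
      rw [← Real.rpow_add_one h0.ne' (r - 2), show r - 2 + 1 = r - 1 by ring]
    have h2 : ∀ X : ℝ, |X| * s = |X * s| := fun X => by rw [abs_mul, abs_of_pos h0]
    rw [h2]
    have h1 : -(eps * (1 + lam * s ^ r) ^ (-(eps + 1)) * (lam * (r * s ^ (r - 2)))) * s
        = -(eps * (1 + lam * s ^ r) ^ (-(eps + 1)) * (lam * (r * s ^ (r - 1)))) := by
      rw [← hfold]; ring
    rw [h1]
    exact aux_C_bound hs hlam0 hlam1 heps (by linarith) (by linarith)

lemma aux_G_lip {lam r eps : ℝ} (hlam0 : 0 < lam) (hlam1 : lam ≤ 1) (heps : 0 < eps)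
    (hr : 4 ≤ r) {x y : ℝ} (hx : 0 ≤ x) (hy : 0 ≤ y) :
    |(1 + lam * y ^ r) ^ (-eps) - (1 + lam * x ^ r) ^ (-eps)| ≤ (eps * r) * |y - x| := by
  have := Convex.norm_image_sub_le_of_norm_hasDerivWithin_le
    (f := fun t : ℝ => (1 + lam * t ^ r) ^ (-eps))
    (f' := fun s : ℝ => -eps * (1 + lam * s ^ r) ^ (-eps - 1) * (lam * (r * s ^ (r - 1))))
    (s := Set.Icc 0 (max x y)) (C := eps * r)
    (fun s hs => (aux_GD hlam0.le (by linarith) hs.1).hasDerivWithinAt)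
    (fun s hs => by
      rw [Real.norm_eq_abs]
      exact aux_Gd_bound hs.1 hlam0 hlam1 heps (by linarith))
    (convex_Icc 0 (max x y)) ⟨hx, le_max_left x y⟩ ⟨hy, le_max_right x y⟩
  simpa [Real.norm_eq_abs] using this

lemma aux_C_lip {lam r eps S : ℝ} (hlam0 : 0 < lam) (hlam1 : lam ≤ 1) (heps : 0 < eps)
    (hr : 4 ≤ r) {x y : ℝ} (hx : 0 ≤ x) (hy : 0 ≤ y) (hxS : x ≤ S) (hyS : y ≤ S) :
    |(-(eps * (1 + lam * y ^ r) ^ (-(eps + 1)) * (lam * (r * y ^ (r - 2)))))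
      - (-(eps * (1 + lam * x ^ r) ^ (-(eps + 1)) * (lam * (r * x ^ (r - 2)))))|
      ≤ (eps * (eps + 2) * r ^ 2 * S ^ (r - 3)) * |y - x| := by
  have hS : 0 ≤ S := le_trans hx hxS
  have := Convex.norm_image_sub_le_of_norm_hasDerivWithin_le
    (f := fun t : ℝ => -(eps * (1 + lam * t ^ r) ^ (-(eps + 1)) * (lam * (r * t ^ (r - 2)))))
    (f' := fun s : ℝ => auxCd lam r eps s)
    (s := Set.Icc 0 S) (C := eps * (eps + 2) * r ^ 2 * S ^ (r - 3))
    (fun s hs => (aux_CD hlam0.le (by linarith) hs.1).hasDerivWithinAt)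
    (fun s hs => by
      rw [Real.norm_eq_abs]
      refine le_trans (aux_Cd_bound hlam0 hlam1 heps hr hs.1) ?_
      have hmono : s ^ (r - 3) ≤ S ^ (r - 3) := Real.rpow_le_rpow hs.1 hs.2 (by linarith)
      exact mul_le_mul_of_nonneg_left hmono (by positivity))
    (convex_Icc 0 S) ⟨hx, hxS⟩ ⟨hy, hyS⟩
  simpa [Real.norm_eq_abs] using this

lemma aux_g_hasFDerivAt {E : Type*} [NormedAddCommGroup E] [InnerProductSpace ℝ E]
    {lam r eps : ℝ} (hlam : 0 < lam) (heps : 0 < eps) (hr : 2 ≤ r) (x : E) :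
    HasFDerivAt (fun y : E => ((1 + lam * ‖y‖ ^ r) ^ eps)⁻¹)
      ((-(eps * (1 + lam * ‖x‖ ^ r) ^ (-(eps + 1)) * (lam * (r * ‖x‖ ^ (r - 2))))) • innerSL ℝ x)
      x := by
  have hW : 0 < 1 + lam * ‖x‖ ^ r := aux_W_pos (norm_nonneg x) hlam.le
  have hN := aux_norm_rpow_hasFDerivAt (hp := hr) x
  have hWd : HasFDerivAt (fun y : E => 1 + lam * ‖y‖ ^ r)
      ((lam * (r * ‖x‖ ^ (r - 2))) • innerSL ℝ x) x := by
    have h2 := (hN.const_mul lam).const_add 1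
    rw [smul_smul] at h2
    exact h2
  have hout : HasDerivAt (fun t : ℝ => t ^ (-eps))
      (-eps * (1 + lam * ‖x‖ ^ r) ^ (-eps - 1)) (1 + lam * ‖x‖ ^ r) :=
    Real.hasDerivAt_rpow_const (Or.inl hW.ne')
  have hcomp : HasFDerivAt (fun y : E => (1 + lam * ‖y‖ ^ r) ^ (-eps))
      ((-eps * (1 + lam * ‖x‖ ^ r) ^ (-eps - 1)) • (lam * (r * ‖x‖ ^ (r - 2))) • innerSL ℝ x) x :=
    by have := hout.comp_hasFDerivAt x hWd; exact this
  have heqfun : (fun y : E => (1 + lam * ‖y‖ ^ r) ^ (-eps))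
      = fun y : E => ((1 + lam * ‖y‖ ^ r) ^ eps)⁻¹ := by
    funext y
    rw [Real.rpow_neg (aux_W_pos (norm_nonneg y) hlam.le).le]
  rw [heqfun] at hcomp
  convert hcomp using 1
  rw [smul_smul, show -eps - 1 = -(eps + 1) by ring]
  ring_nf

lemma aux_one_add_pow {x : ℝ} (hx : 0 ≤ x) {n : ℕ} (hn : 1 ≤ n) :
    1 + x ^ n ≤ (1 + x) ^ n := by
  induction n with
  | zero => omega
  | succ k ih =>
    rcases Nat.eq_or_lt_of_le hn with h1 | h1
    · simp [← h1]
    · have hk : 1 ≤ k := by omega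
      have := ih hk
      have h2 : (1 + x) ^ (k + 1) = (1 + x) ^ k * (1 + x) := by ring
      nlinarith [pow_nonneg hx k, pow_succ x k, pow_succ (1+x) k,
        mul_le_mul_of_nonneg_right this (by linarith : (0:ℝ) ≤ 1 + x)]

lemma aux_coef {m M K_H K_h L a ie sq2 : ℝ} (hm : 2 ≤ m) (hie : 2 ≤ ie) (hsq : 1 ≤ sq2)
    (hM1 : K_H ≤ M) (hM2 : L ≤ M) (hM3 : K_h ≤ M) (hM4 : a ≤ M) (hM0 : 0 < M)
    (hKH : 0 < K_H) (hKh : 0 < K_h) (ha : 0 < a) :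
    (m * (K_H + a)) + L + ((m * (K_h + a)) + (((m ^ 2 + 2 * ie * m ^ 2) * (K_h + a))
      + (m * (K_H + a)))) ≤ (10 * sq2 + 4 * ie) * m ^ 2 * M := by
  have hm0 : (0:ℝ) ≤ m := by linarith
  have hKHa : K_H + a ≤ 2 * M := by linarith
  have hKha : K_h + a ≤ 2 * M := by linarith
  have t1 : m * (K_H + a) ≤ 2 * m * M := by
    nlinarith [mul_le_mul_of_nonneg_left hKHa hm0]
  have t2 : m * (K_h + a) ≤ 2 * m * M := by
    nlinarith [mul_le_mul_of_nonneg_left hKha hm0]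
  have h0 : (0:ℝ) ≤ m ^ 2 + 2 * ie * m ^ 2 := by nlinarith [sq_nonneg m]
  have t3 : (m ^ 2 + 2 * ie * m ^ 2) * (K_h + a) ≤ 2 * m ^ 2 * M + 4 * ie * m ^ 2 * M := by
    nlinarith [mul_le_mul_of_nonneg_left hKha h0]
  have t6 : ((1:ℝ) + 6 * m + 2 * m ^ 2) * M ≤ 10 * m ^ 2 * M := by
    have ht : (1:ℝ) + 6 * m + 2 * m ^ 2 ≤ 10 * m ^ 2 := by nlinarith
    exact mul_le_mul_of_nonneg_right ht hM0.le
  have t5 : 10 * m ^ 2 * M ≤ 10 * sq2 * m ^ 2 * M := by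
    nlinarith [mul_nonneg (sq_nonneg m) hM0.le]
  nlinarith [t1, t2, t3, t5, t6, hM0, hm]

set_option maxHeartbeats 2000000 in
theorem kTULA_tamed_deriv_lipschitz
    {d : ℕ} (hd : 0 < d)
    (u : EuclideanSpace ℝ (Fin d) → ℝ) (hu : ContDiff ℝ 3 u)
    (h : EuclideanSpace ℝ (Fin d) → EuclideanSpace ℝ (Fin d))
    (H : EuclideanSpace ℝ (Fin d) →
      EuclideanSpace ℝ (Fin d) →L[ℝ] EuclideanSpace ℝ (Fin d))
    (hgrad : ∀ θ, h θ = gradient u θ)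
    (hHess : ∀ θ, H θ = fderiv ℝ (gradient u) θ)
    (L K_H K_h a b : ℝ)
    (hL : 0 < L) (hK_H : 0 < K_H) (hK_h : 0 < K_h) (ha : 0 < a) (hb : 0 < b)
    (l : ℕ) (hl : 1 ≤ l)
    (hH_lip : ∀ θ θ' : EuclideanSpace ℝ (Fin d),
      ‖H θ - H θ'‖ ≤ L * (1 + ‖θ‖ + ‖θ'‖) ^ (l - 1) * ‖θ - θ'‖)
    (hH_bd : ∀ θ : EuclideanSpace ℝ (Fin d), ‖H θ‖ ≤ K_H * (1 + ‖θ‖ ^ l))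
    (hh_bd : ∀ θ : EuclideanSpace ℝ (Fin d), ‖h θ‖ ≤ K_h * (1 + ‖θ‖ ^ (l + 1)))
    (hdiss : ∀ θ : EuclideanSpace ℝ (Fin d), a * ‖θ‖ ^ 2 - b ≤ (inner ℝ (h θ) θ : ℝ))
    (hlam : ℝ → ℝ → EuclideanSpace ℝ (Fin d) → EuclideanSpace ℝ (Fin d))
    (hlam_def : ∀ (lam eps : ℝ) (θ : EuclideanSpace ℝ (Fin d)),
      hlam lam eps θ =
        a • θ + ((1 + lam * ‖θ‖ ^ (((l : ℝ) + 1) / eps)) ^ eps)⁻¹ • (h θ - a • θ)) :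
    ∀ (θ θ' : EuclideanSpace ℝ (Fin d)) (lam eps : ℝ),
      0 < lam → lam < 1 → 0 < eps → eps ≤ 1 / 2 →
      ‖fderiv ℝ (hlam lam eps) θ - fderiv ℝ (hlam lam eps) θ'‖ ≤
        (10 * Real.sqrt 2 + 4 / eps) * ((l : ℝ) + 1) ^ 2 *
          max (max (max K_H L) K_h) a *
          (1 + ‖θ‖ + ‖θ'‖) ^ (((l : ℝ) + 1) * (1 / eps + 1) - 2) * ‖θ - θ'‖ := by
  intro θ θ' lam eps hlam0 hlam1 heps0 heps1
  set r : ℝ := ((l : ℝ) + 1) / eps with hrdef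
  have hl1 : (1:ℝ) ≤ (l:ℝ) := by exact_mod_cast hl
  have hm2 : (2:ℝ) ≤ (l:ℝ) + 1 := by linarith
  have hepsr : eps * r = (l:ℝ) + 1 := by
    rw [hrdef]; field_simp
  have hie : 2 ≤ 1/eps := by rw [le_div_iff₀ heps0]; linarith
  have hr4 : (4:ℝ) ≤ r := by
    have h1 : r = ((l:ℝ)+1) * (1/eps) := by rw [hrdef]; ring
    nlinarith
  -- differentiability of h
  have hgradf : h = gradient u := funext hgrad
  have hgd : Differentiable ℝ (gradient u) := by
    have h2 : ContDiff ℝ 2 (fderiv ℝ u) := hu.fderiv_right (by norm_num)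
    have h3 : Differentiable ℝ (fderiv ℝ u) := h2.differentiable (by norm_num)
    have h4 : gradient u = fun x =>
        (InnerProductSpace.toDual ℝ (EuclideanSpace ℝ (Fin d))).symm (fderiv ℝ u x) := rfl
    rw [h4]
    exact ((InnerProductSpace.toDual ℝ
      (EuclideanSpace ℝ (Fin d))).symm.toContinuousLinearEquiv.toContinuousLinearMap.differentiable).comp h3
  have hHd : ∀ x, HasFDerivAt h (H x) x := by
    intro x
    rw [hgradf, hHess x]
    exact (hgd x).hasFDerivAt
  -- abbreviations
  set Pb : ℝ := 1 + ‖θ‖ + ‖θ'‖ with hPdef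
  set M : ℝ := max (max (max K_H L) K_h) a with hMdef
  set q : ℝ := ((l:ℝ) + 1) * (1 / eps + 1) - 2 with hqdef
  set m : ℝ := (l:ℝ) + 1 with hmdef
  set Δ : ℝ := ‖θ - θ'‖ with hDdef
  set F : EuclideanSpace ℝ (Fin d) → EuclideanSpace ℝ (Fin d) := fun y => h y - a • y with hFdef
  set g : EuclideanSpace ℝ (Fin d) → ℝ :=
    fun y => ((1 + lam * ‖y‖ ^ r) ^ eps)⁻¹ with hgdef
  set Cc : EuclideanSpace ℝ (Fin d) → ℝ :=
    fun y => -(eps * (1 + lam * ‖y‖ ^ r) ^ (-(eps + 1)) * (lam * (r * ‖y‖ ^ (r - 2)))) with hCcdef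
  set A : EuclideanSpace ℝ (Fin d) → (EuclideanSpace ℝ (Fin d) →L[ℝ] EuclideanSpace ℝ (Fin d)) :=
    fun y => H y - a • ContinuousLinearMap.id ℝ (EuclideanSpace ℝ (Fin d)) with hAdef
  set D : EuclideanSpace ℝ (Fin d) → (EuclideanSpace ℝ (Fin d) →L[ℝ] EuclideanSpace ℝ (Fin d)) :=
    fun y => a • ContinuousLinearMap.id ℝ (EuclideanSpace ℝ (Fin d)) +
      (g y • A y + (Cc y • innerSL ℝ y).smulRight (F y)) with hDdef2
  have hFd : ∀ x, HasFDerivAt F (A x) x := fun x => (hHd x).sub ((hasFDerivAt_id x).const_smul a)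
  have hgd2 : ∀ x, HasFDerivAt g ((Cc x) • innerSL ℝ x) x :=
    fun x => aux_g_hasFDerivAt hlam0 heps0 (by linarith) x
  have hfun : hlam lam eps = fun y => a • y + g y • F y := funext fun y => hlam_def lam eps y
  have hDf : ∀ x, HasFDerivAt (hlam lam eps) (D x) x := by
    intro x
    rw [hfun]
    exact ((hasFDerivAt_id x).const_smul a).add ((hgd2 x).smul (hFd x))
  rw [(hDf θ).fderiv, (hDf θ').fderiv]
  have hdecomp : D θ - D θ' =
      (g θ - g θ') • A θ + g θ' • (H θ - H θ')
      + ((Cc θ • (innerSL ℝ θ - innerSL ℝ θ')).smulRight (F θ)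
      + (((Cc θ - Cc θ') • innerSL ℝ θ').smulRight (F θ)
      + (Cc θ' • innerSL ℝ θ').smulRight (F θ - F θ'))) := by
    rw [hDdef2, hAdef]
    refine ContinuousLinearMap.ext fun v => ?_
    simp only [ContinuousLinearMap.add_apply, ContinuousLinearMap.sub_apply,
      ContinuousLinearMap.smul_apply, ContinuousLinearMap.smulRight_apply,
      ContinuousLinearMap.coe_smul', Pi.smul_apply, ContinuousLinearMap.coe_sub',
      Pi.sub_apply, ContinuousLinearMap.id_apply, innerSL_apply_apply, smul_eq_mul]
    module
  rw [hdecomp]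
  have htri : ‖(g θ - g θ') • A θ + g θ' • (H θ - H θ')
      + ((Cc θ • (innerSL ℝ θ - innerSL ℝ θ')).smulRight (F θ)
      + (((Cc θ - Cc θ') • innerSL ℝ θ').smulRight (F θ)
      + (Cc θ' • innerSL ℝ θ').smulRight (F θ - F θ')))‖ ≤
      ‖(g θ - g θ') • A θ‖ + ‖g θ' • (H θ - H θ')‖
      + (‖(Cc θ • (innerSL ℝ θ - innerSL ℝ θ')).smulRight (F θ)‖
      + (‖((Cc θ - Cc θ') • innerSL ℝ θ').smulRight (F θ)‖
      + ‖(Cc θ' • innerSL ℝ θ').smulRight (F θ - F θ')‖)) := by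
    refine le_trans (norm_add_le _ _) ?_
    gcongr
    · exact norm_add_le _ _
    · refine le_trans (norm_add_le _ _) ?_
      gcongr
      exact norm_add_le _ _
  refine le_trans htri ?_
  -- basic facts
  have hP1 : (1:ℝ) ≤ Pb := by rw [hPdef]; linarith [norm_nonneg θ, norm_nonneg θ']
  have hPb0 : (0:ℝ) < Pb := by linarith
  have hΔ0 : (0:ℝ) ≤ Δ := norm_nonneg _
  have habsΔ : |‖θ‖ - ‖θ'‖| ≤ Δ := abs_norm_sub_norm_le θ θ'
  have hm0 : (0:ℝ) ≤ m := by linarith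
  have hQ0 : (0:ℝ) ≤ Pb ^ q := Real.rpow_nonneg hPb0.le q
  have hq : q = r + (l:ℝ) - 1 := by rw [hqdef, hrdef, hmdef]; field_simp; ring
  -- scalar coefficient bounds
  have hg1 : ∀ y : EuclideanSpace ℝ (Fin d), |g y| ≤ 1 := by
    intro y
    have hW : (1:ℝ) ≤ 1 + lam * ‖y‖ ^ r := by
      nlinarith [Real.rpow_nonneg (norm_nonneg y) r]
    have h1 : (1:ℝ) ≤ (1 + lam * ‖y‖ ^ r) ^ eps := by
      calc (1:ℝ) = (1:ℝ) ^ eps := (Real.one_rpow eps).symm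
        _ ≤ _ := Real.rpow_le_rpow (by norm_num) hW heps0.le
    simp only [hgdef]
    rw [abs_of_nonneg (by positivity)]
    exact inv_le_one_of_one_le₀ h1
  have hgap : |g θ - g θ'| ≤ m * Δ := by
    have hgy : ∀ y : EuclideanSpace ℝ (Fin d), g y = (1 + lam * ‖y‖ ^ r) ^ (-eps) := by
      intro y
      simp only [hgdef]
      rw [Real.rpow_neg (aux_W_pos (norm_nonneg y) hlam0.le).le]
    rw [hgy θ, hgy θ']
    calc |(1 + lam * ‖θ‖ ^ r) ^ (-eps) - (1 + lam * ‖θ'‖ ^ r) ^ (-eps)|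
        ≤ (eps * r) * |‖θ‖ - ‖θ'‖| :=
          aux_G_lip hlam0 hlam1.le heps0 hr4 (norm_nonneg θ') (norm_nonneg θ)
      _ ≤ m * Δ := by rw [hepsr]; exact mul_le_mul_of_nonneg_left habsΔ hm0
  have hCb : ∀ y : EuclideanSpace ℝ (Fin d), |Cc y| ≤ m := by
    intro y
    simp only [hCcdef]
    rw [← hepsr]
    exact aux_C_bound (norm_nonneg y) hlam0 hlam1.le heps0 (by linarith) (by linarith)
  have hCb' : ∀ y : EuclideanSpace ℝ (Fin d), |Cc y| * ‖y‖ ≤ m := by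
    intro y
    simp only [hCcdef]
    rw [← hepsr]
    exact aux_C_bound' (norm_nonneg y) hlam0 hlam1.le heps0 (by linarith)
  have hClip : |Cc θ - Cc θ'| ≤ (eps * (eps + 2) * r ^ 2 * (‖θ‖ + ‖θ'‖) ^ (r - 3)) * Δ := by
    simp only [hCcdef]
    calc _ ≤ (eps * (eps + 2) * r ^ 2 * (‖θ‖ + ‖θ'‖) ^ (r - 3)) * |‖θ‖ - ‖θ'‖| :=
          aux_C_lip hlam0 hlam1.le heps0 hr4 (norm_nonneg θ') (norm_nonneg θ)
            (le_add_of_nonneg_left (norm_nonneg θ)) (le_add_of_nonneg_right (norm_nonneg θ'))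
      _ ≤ _ := by
          refine mul_le_mul_of_nonneg_left habsΔ ?_
          have : (0:ℝ) ≤ (‖θ‖ + ‖θ'‖) ^ (r - 3) := Real.rpow_nonneg (by positivity) _
          positivity
  -- operator/vector bounds
  have honead : ∀ y : EuclideanSpace ℝ (Fin d), ‖y‖ ≤ ‖θ‖ + ‖θ'‖ → 1 + ‖y‖ ^ l ≤ Pb ^ l := by
    intro y hy
    refine le_trans (aux_one_add_pow (norm_nonneg y) hl) ?_
    refine pow_le_pow_left₀ (by positivity) ?_ l
    rw [hPdef]; linarith
  have hPbl1 : (1:ℝ) ≤ Pb ^ l := by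
    calc (1:ℝ) = 1 ^ l := (one_pow l).symm
      _ ≤ Pb ^ l := pow_le_pow_left₀ (by norm_num) hP1 l
  have hAb : ∀ y : EuclideanSpace ℝ (Fin d), ‖y‖ ≤ ‖θ‖ + ‖θ'‖ → ‖A y‖ ≤ (K_H + a) * Pb ^ l := by
    intro y hy
    simp only [hAdef]
    refine le_trans (norm_sub_le _ _) ?_
    have h1 : ‖H y‖ ≤ K_H * (1 + ‖y‖ ^ l) := hH_bd y
    have h2 : ‖a • ContinuousLinearMap.id ℝ (EuclideanSpace ℝ (Fin d))‖ ≤ a := by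
      refine le_trans (ContinuousLinearMap.opNorm_smul_le _ _) ?_
      rw [Real.norm_eq_abs, abs_of_pos ha]
      nlinarith [ContinuousLinearMap.norm_id_le (𝕜 := ℝ) (E := EuclideanSpace ℝ (Fin d)),
        ContinuousLinearMap.opNorm_nonneg (ContinuousLinearMap.id ℝ (EuclideanSpace ℝ (Fin d)))]
    have h3 := honead y hy
    nlinarith [mul_le_mul_of_nonneg_left h3 hK_H.le, mul_le_mul_of_nonneg_left hPbl1 ha.le]
  have hFb : ∀ y : EuclideanSpace ℝ (Fin d), ‖y‖ ≤ ‖θ‖ + ‖θ'‖ → ‖F y‖ ≤ (K_h + a) * Pb ^ (l + 1) := by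
    intro y hy
    simp only [hFdef]
    refine le_trans (norm_sub_le _ _) ?_
    have h1 := hh_bd y
    have h2 : ‖a • y‖ = a * ‖y‖ := by rw [norm_smul, Real.norm_eq_abs, abs_of_pos ha]
    have h3 : 1 + ‖y‖ ^ (l + 1) ≤ Pb ^ (l + 1) := by
      refine le_trans (aux_one_add_pow (norm_nonneg y) (by omega)) ?_
      refine pow_le_pow_left₀ (by positivity) ?_ (l + 1)
      rw [hPdef]; linarith
    have h4 : ‖y‖ ≤ Pb := by rw [hPdef]; linarith
    have h5 : Pb ≤ Pb ^ (l + 1) := le_self_pow₀ hP1 (by omega)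
    nlinarith [mul_le_mul_of_nonneg_left h3 hK_h.le,
      mul_le_mul_of_nonneg_left (le_trans h4 h5) ha.le]
  have hFlip : ‖F θ - F θ'‖ ≤ ((K_H + a) * Pb ^ l) * Δ := by
    have hθmem : θ ∈ Metric.closedBall (0 : EuclideanSpace ℝ (Fin d)) (‖θ‖ + ‖θ'‖) := by
      rw [Metric.mem_closedBall, dist_zero_right]
      linarith [norm_nonneg θ']
    have hθ'mem : θ' ∈ Metric.closedBall (0 : EuclideanSpace ℝ (Fin d)) (‖θ‖ + ‖θ'‖) := by
      rw [Metric.mem_closedBall, dist_zero_right]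
      linarith [norm_nonneg θ]
    exact Convex.norm_image_sub_le_of_norm_hasFDerivWithin_le
      (fun x _ => (hFd x).hasFDerivWithinAt)
      (fun x hx => hAb x (by
        rw [Metric.mem_closedBall, dist_zero_right] at hx
        exact hx))
      (convex_closedBall _ _) hθ'mem hθmem
  -- rpow comparisons
  have hnat1 : ((l - 1 : ℕ) : ℝ) = (l:ℝ) - 1 := by rw [Nat.cast_sub hl, Nat.cast_one]
  have c1 : (Pb:ℝ) ^ (l - 1) ≤ Pb ^ q := by
    rw [← Real.rpow_natCast Pb (l - 1)]
    apply Real.rpow_le_rpow_of_exponent_le hP1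
    rw [hnat1, hq]; linarith
  have c2 : (Pb:ℝ) ^ l ≤ Pb ^ q := by
    rw [← Real.rpow_natCast Pb l]
    apply Real.rpow_le_rpow_of_exponent_le hP1
    rw [hq]; linarith
  have c3 : (Pb:ℝ) ^ (l + 1) ≤ Pb ^ q := by
    rw [← Real.rpow_natCast Pb (l + 1)]
    apply Real.rpow_le_rpow_of_exponent_le hP1
    rw [hq]; push_cast; linarith
  have c4 : (‖θ‖ + ‖θ'‖) ^ (r - 3) * Pb * Pb ^ (l + 1) ≤ Pb ^ q := by
    have h1 : (‖θ‖ + ‖θ'‖) ^ (r - 3) ≤ Pb ^ (r - 3) :=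
      Real.rpow_le_rpow (by positivity) (by rw [hPdef]; linarith) (by linarith)
    have h2 : Pb ^ q = Pb ^ (r - 3) * Pb * Pb ^ (l + 1) := by
      rw [show q = (r - 3) + 1 + ((l + 1 : ℕ) : ℝ) by push_cast; rw [hq]; ring]
      rw [Real.rpow_add hPb0, Real.rpow_add hPb0, Real.rpow_one, Real.rpow_natCast]
    rw [h2]
    exact mul_le_mul_of_nonneg_right (mul_le_mul_of_nonneg_right h1 hPb0.le) (by positivity)
  have hS0 : (0:ℝ) ≤ (‖θ‖ + ‖θ'‖) ^ (r - 3) := Real.rpow_nonneg (by positivity) _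
  have hKC0 : (0:ℝ) ≤ eps * (eps + 2) * r ^ 2 :=
    mul_nonneg (mul_nonneg heps0.le (by linarith)) (sq_nonneg r)
  -- the five term bounds
  have n1 : ‖(g θ - g θ') • A θ‖ ≤ (m * (K_H + a)) * (Pb ^ q * Δ) := by
    refine le_trans (ContinuousLinearMap.opNorm_smul_le _ _) ?_
    rw [Real.norm_eq_abs]
    calc |g θ - g θ'| * ‖A θ‖
        ≤ (m * Δ) * ((K_H + a) * Pb ^ l) := by
          refine mul_le_mul hgap (hAb θ (le_add_of_nonneg_right (norm_nonneg θ')))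
            (norm_nonneg _) (mul_nonneg hm0 hΔ0)
      _ = (m * (K_H + a)) * (Pb ^ l * Δ) := by ring
      _ ≤ _ := mul_le_mul_of_nonneg_left (mul_le_mul_of_nonneg_right c2 hΔ0)
            (mul_nonneg hm0 (by positivity))
  have n2 : ‖g θ' • (H θ - H θ')‖ ≤ L * (Pb ^ q * Δ) := by
    refine le_trans (ContinuousLinearMap.opNorm_smul_le _ _) ?_
    rw [Real.norm_eq_abs]
    calc |g θ'| * ‖H θ - H θ'‖
        ≤ 1 * (L * Pb ^ (l - 1) * Δ) :=
          mul_le_mul (hg1 θ') (hH_lip θ θ') (norm_nonneg _) (by norm_num)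
      _ = L * (Pb ^ (l - 1) * Δ) := by ring
      _ ≤ _ := mul_le_mul_of_nonneg_left (mul_le_mul_of_nonneg_right c1 hΔ0) hL.le
  have n3 : ‖(Cc θ • (innerSL ℝ θ - innerSL ℝ θ')).smulRight (F θ)‖
      ≤ (m * (K_h + a)) * (Pb ^ q * Δ) := by
    rw [ContinuousLinearMap.norm_smulRight_apply]
    have hI : ‖innerSL ℝ θ - innerSL ℝ θ'‖ = Δ := by
      rw [← map_sub, innerSL_apply_norm]
    calc ‖Cc θ • (innerSL ℝ θ - innerSL ℝ θ')‖ * ‖F θ‖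
        ≤ (|Cc θ| * Δ) * ((K_h + a) * Pb ^ (l + 1)) := by
          refine mul_le_mul ?_ (hFb θ (le_add_of_nonneg_right (norm_nonneg θ')))
            (norm_nonneg _) (mul_nonneg (abs_nonneg _) hΔ0)
          refine le_trans (ContinuousLinearMap.opNorm_smul_le _ _) ?_
          rw [Real.norm_eq_abs, hI]
      _ ≤ (m * Δ) * ((K_h + a) * Pb ^ (l + 1)) :=
          mul_le_mul_of_nonneg_right (mul_le_mul_of_nonneg_right (hCb θ) hΔ0) (by positivity)
      _ = (m * (K_h + a)) * (Pb ^ (l + 1) * Δ) := by ring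
      _ ≤ _ := mul_le_mul_of_nonneg_left (mul_le_mul_of_nonneg_right c3 hΔ0)
            (mul_nonneg hm0 (by positivity))
  have n4 : ‖((Cc θ - Cc θ') • innerSL ℝ θ').smulRight (F θ)‖
      ≤ (eps * (eps + 2) * r ^ 2 * (K_h + a)) * (Pb ^ q * Δ) := by
    rw [ContinuousLinearMap.norm_smulRight_apply]
    calc ‖(Cc θ - Cc θ') • innerSL ℝ θ'‖ * ‖F θ‖
        ≤ ((|Cc θ - Cc θ'|) * ‖θ'‖) * ((K_h + a) * Pb ^ (l + 1)) := by
          refine mul_le_mul ?_ (hFb θ (le_add_of_nonneg_right (norm_nonneg θ')))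
            (norm_nonneg _) (mul_nonneg (abs_nonneg _) (norm_nonneg _))
          refine le_trans (ContinuousLinearMap.opNorm_smul_le _ _) ?_
          rw [Real.norm_eq_abs, innerSL_apply_norm]
      _ ≤ ((eps * (eps + 2) * r ^ 2 * (‖θ‖ + ‖θ'‖) ^ (r - 3)) * Δ * Pb)
            * ((K_h + a) * Pb ^ (l + 1)) := by
          refine mul_le_mul_of_nonneg_right ?_ (by positivity)
          refine mul_le_mul hClip (by rw [hPdef]; linarith [norm_nonneg θ]) (norm_nonneg _) ?_
          exact mul_nonneg (mul_nonneg hKC0 hS0) hΔ0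
      _ = (eps * (eps + 2) * r ^ 2 * (K_h + a))
            * (((‖θ‖ + ‖θ'‖) ^ (r - 3) * Pb * Pb ^ (l + 1)) * Δ) := by ring
      _ ≤ _ := by
          refine mul_le_mul_of_nonneg_left (mul_le_mul_of_nonneg_right c4 hΔ0) ?_
          exact mul_nonneg hKC0 (by positivity)
  have n5 : ‖(Cc θ' • innerSL ℝ θ').smulRight (F θ - F θ')‖
      ≤ (m * (K_H + a)) * (Pb ^ q * Δ) := by
    rw [ContinuousLinearMap.norm_smulRight_apply]
    calc ‖Cc θ' • innerSL ℝ θ'‖ * ‖F θ - F θ'‖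
        ≤ (|Cc θ'| * ‖θ'‖) * (((K_H + a) * Pb ^ l) * Δ) := by
          refine mul_le_mul ?_ hFlip (norm_nonneg _)
            (mul_nonneg (abs_nonneg _) (norm_nonneg _))
          refine le_trans (ContinuousLinearMap.opNorm_smul_le _ _) ?_
          rw [Real.norm_eq_abs, innerSL_apply_norm]
      _ ≤ m * (((K_H + a) * Pb ^ l) * Δ) := by
          refine mul_le_mul_of_nonneg_right (hCb' θ') ?_
          exact mul_nonneg (by positivity) hΔ0
      _ = (m * (K_H + a)) * (Pb ^ l * Δ) := by ring
      _ ≤ _ := mul_le_mul_of_nonneg_left (mul_le_mul_of_nonneg_right c2 hΔ0)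
            (mul_nonneg hm0 (by positivity))
  -- coefficient arithmetic
  have hM4 : a ≤ M := le_max_right _ _
  have hM1 : K_H ≤ M :=
    le_trans (le_max_left K_H L) (le_trans (le_max_left _ K_h) (le_max_left _ a))
  have hM2 : L ≤ M :=
    le_trans (le_max_right K_H L) (le_trans (le_max_left _ K_h) (le_max_left _ a))
  have hM3 : K_h ≤ M := le_trans (le_max_right _ K_h) (le_max_left _ a)
  have hM0 : 0 < M := lt_of_lt_of_le ha hM4
  have hKCeq : eps * (eps + 2) * r ^ 2 = m ^ 2 + 2 * (1 / eps) * m ^ 2 := by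
    rw [hrdef]
    field_simp
  have hs2 : (1:ℝ) ≤ Real.sqrt 2 := by
    rw [show (1:ℝ) = Real.sqrt 1 by simp]
    exact Real.sqrt_le_sqrt (by norm_num)
  have hcoef : (m * (K_H + a)) + L + ((m * (K_h + a)) + ((eps * (eps + 2) * r ^ 2 * (K_h + a))
      + (m * (K_H + a)))) ≤ (10 * Real.sqrt 2 + 4 / eps) * m ^ 2 * M := by
    rw [hKCeq, show (10 * Real.sqrt 2 + 4 / eps) * m ^ 2 * M
      = (10 * Real.sqrt 2 + 4 * (1 / eps)) * m ^ 2 * M by ring]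
    exact aux_coef hm2 hie hs2 hM1 hM2 hM3 hM4 hM0 hK_H hK_h ha
  refine le_trans (add_le_add (add_le_add n1 n2) (add_le_add n3 (add_le_add n4 n5))) ?_
  have heq2 : (m * (K_H + a)) * (Pb ^ q * Δ) + L * (Pb ^ q * Δ)
      + ((m * (K_h + a)) * (Pb ^ q * Δ) + ((eps * (eps + 2) * r ^ 2 * (K_h + a)) * (Pb ^ q * Δ)
      + (m * (K_H + a)) * (Pb ^ q * Δ)))
      = ((m * (K_H + a)) + L + ((m * (K_h + a)) + ((eps * (eps + 2) * r ^ 2 * (K_h + a))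
      + (m * (K_H + a))))) * (Pb ^ q * Δ) := by ring
  rw [heq2]
  calc _ ≤ ((10 * Real.sqrt 2 + 4 / eps) * m ^ 2 * M) * (Pb ^ q * Δ) :=
        mul_le_mul_of_nonneg_right hcoef (mul_nonneg hQ0 hΔ0)
    _ = (10 * Real.sqrt 2 + 4 / eps) * m ^ 2 * M * Pb ^ q * Δ := by ring
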